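/- Suppose (x, X, y, Y₁₂, α) lacks only (P4a), α₁ = 0, X₁₁ > 0, and α₂ > α₂⁺. Then the point (x, X, y, Y₁₂, (0, α₂⁺)) satisfies all of the conditions (L), (P3), (P4a), (P4b), and (P5). -/

import Mathlib

open Matrix

set_option linter.unusedVariables false

/-- Linear conditions (L). -/
def Lcond (x1 x2 X11 X12 X22 y1 y2 Y12 a1 a2 : ℝ) : Prop :=
  X11 ≤ x1 ∧ x1 ≤ y1 ∧ X22 ≤ x2 ∧ x2 ≤ y2 ∧
  max 0 (x1 - a1 + x2 - a2 - Y12) ≤ X12 ∧ X12 ≤ min (x1 - a1) (x2 - a2) ∧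
  0 ≤ a1 ∧ a1 ≤ y1 - Y12 ∧ 0 ≤ a2 ∧ a2 ≤ y2 - Y12 ∧
  max 0 (y1 + y2 - 1) ≤ Y12 ∧ Y12 ≤ min y1 y2

/-- PSD condition (P3). -/
def P3cond (x1 x2 X11 X12 X22 y1 y2 Y12 a1 a2 : ℝ) : Prop :=
  (!![Y12, x1 - a1, x2 - a2;
      x1 - a1, x1 - a1, X12;
      x2 - a2, X12, x2 - a2] : Matrix (Fin 3) (Fin 3) ℝ).PosSemidef

/-- PSD condition (P4a). -/
def P4acond (x1 x2 X11 X12 X22 y1 y2 Y12 a1 a2 : ℝ) : Prop :=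
  (!![y1 - Y12, 0, a1, 0;
      0, Y12, x1 - a1, x2 - a2;
      a1, x1 - a1, X11, X12;
      0, x2 - a2, X12, x2 - a2] : Matrix (Fin 4) (Fin 4) ℝ).PosSemidef

/-- PSD condition (P4b). -/
def P4bcond (x1 x2 X11 X12 X22 y1 y2 Y12 a1 a2 : ℝ) : Prop :=
  (!![y2 - Y12, 0, 0, a2;
      0, Y12, x1 - a1, x2 - a2;
      0, x1 - a1, x1 - a1, X12;
      a2, x2 - a2, X12, X22] : Matrix (Fin 4) (Fin 4) ℝ).PosSemidef

/-- PSD condition (P5). -/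
def P5cond (x1 x2 X11 X12 X22 y1 y2 Y12 a1 a2 : ℝ) : Prop :=
  (!![y1 - Y12, 0, 0, a1, 0;
      0, y2 - Y12, 0, 0, a2;
      0, 0, Y12, x1 - a1, x2 - a2;
      a1, 0, x1 - a1, X11, X12;
      0, a2, x2 - a2, X12, X22] : Matrix (Fin 5) (Fin 5) ℝ).PosSemidef

/-- (x, X, y, Y₁₂, α) lacks only (P4a): it satisfies (L), (P3), (P4b), (P5)
but violates (P4a). -/
def LacksOnlyP4a (x1 x2 X11 X12 X22 y1 y2 Y12 a1 a2 : ℝ) : Prop :=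
  Lcond x1 x2 X11 X12 X22 y1 y2 Y12 a1 a2 ∧
  P3cond x1 x2 X11 X12 X22 y1 y2 Y12 a1 a2 ∧
  P4bcond x1 x2 X11 X12 X22 y1 y2 Y12 a1 a2 ∧
  P5cond x1 x2 X11 X12 X22 y1 y2 Y12 a1 a2 ∧
  ¬ P4acond x1 x2 X11 X12 X22 y1 y2 Y12 a1 a2

/-- α₂⁻ = x₂ − X₁₂x₁/X₁₁ − (θ + √Δ)/(2X₁₁), where θ = Y₁₂X₁₁ − x₁² and
Δ = θ(θ + 4X₁₂(x₁ − X₁₂)). -/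
noncomputable def alpha2minus (x1 x2 X11 X12 Y12 : ℝ) : ℝ :=
  x2 - X12 * x1 / X11 -
    ((Y12 * X11 - x1 ^ 2) +
      Real.sqrt ((Y12 * X11 - x1 ^ 2) *
        ((Y12 * X11 - x1 ^ 2) + 4 * X12 * (x1 - X12)))) / (2 * X11)

/-- α₂⁺ = x₂ − X₁₂x₁/X₁₁ − (θ − √Δ)/(2X₁₁), where θ = Y₁₂X₁₁ − x₁² and
Δ = θ(θ + 4X₁₂(x₁ − X₁₂)). -/
noncomputable def alpha2plus (x1 x2 X11 X12 Y12 : ℝ) : ℝ :=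
  x2 - X12 * x1 / X11 -
    ((Y12 * X11 - x1 ^ 2) -
      Real.sqrt ((Y12 * X11 - x1 ^ 2) *
        ((Y12 * X11 - x1 ^ 2) + 4 * X12 * (x1 - X12)))) / (2 * X11)

set_option maxHeartbeats 1000000

/-- If (x, X, y, Y₁₂, α) lacks only (P4a), α₁ = 0, X₁₁ > 0 and α₂ > α₂⁺, then
(x, X, y, Y₁₂, (0, α₂⁺)) satisfies (L), (P3), (P4a), (P4b) and (P5). -/
theorem stmt13 (x1 x2 X11 X12 X22 y1 y2 Y12 a2 : ℝ)
    (h : LacksOnlyP4a x1 x2 X11 X12 X22 y1 y2 Y12 0 a2)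
    (hX : 0 < X11) (hgt : alpha2plus x1 x2 X11 X12 Y12 < a2) :
    Lcond x1 x2 X11 X12 X22 y1 y2 Y12 0 (alpha2plus x1 x2 X11 X12 Y12) ∧
    P3cond x1 x2 X11 X12 X22 y1 y2 Y12 0 (alpha2plus x1 x2 X11 X12 Y12) ∧
    P4acond x1 x2 X11 X12 X22 y1 y2 Y12 0 (alpha2plus x1 x2 X11 X12 Y12) ∧
    P4bcond x1 x2 X11 X12 X22 y1 y2 Y12 0 (alpha2plus x1 x2 X11 X12 Y12) ∧
    P5cond x1 x2 X11 X12 X22 y1 y2 Y12 0 (alpha2plus x1 x2 X11 X12 Y12) := by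
  obtain ⟨hL, hP3, hP4b, hP5, _⟩ := h
  obtain ⟨l1, l2, l3, l4, l5, l6, l7, l8, l9, l10, l11, l12⟩ := hL
  set A := alpha2plus x1 x2 X11 X12 Y12 with hAdef
  have hX12n : (0:ℝ) ≤ X12 := le_trans (le_max_left _ _) l5
  have hRLTo : x1 - 0 + x2 - a2 - Y12 ≤ X12 := le_trans (le_max_right _ _) l5
  have hX12x1 : X12 ≤ x1 := by have := le_trans l6 (min_le_left _ _); linarith
  have hX12t : X12 ≤ x2 - a2 := le_trans l6 (min_le_right _ _)
  have hY12y1 : Y12 ≤ y1 := le_trans l12 (min_le_left _ _)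
  have hY12y2 : Y12 ≤ y2 := le_trans l12 (min_le_right _ _)
  have hY12n : (0:ℝ) ≤ Y12 := le_trans (le_max_left _ _) l11
  have hx1 : 0 < x1 := lt_of_lt_of_le hX l1
  -- Y12 ≥ x1 from P3
  have eYx := hP3.dotProduct_mulVec_nonneg ![1, -1, 0]
  simp [Matrix.mulVec, dotProduct, Fin.sum_univ_succ] at eYx
  have hYx : x1 ≤ Y12 := by nlinarith only [eYx]
  clear eYx
  -- θ ≥ 0 from P5
  have eTh := hP5.dotProduct_mulVec_nonneg ![0, 0, x1, -Y12, 0]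
  simp [Matrix.mulVec, dotProduct, Fin.sum_univ_succ] at eTh
  have hth0 : (0:ℝ) ≤ Y12*X11 - x1^2 := by nlinarith only [eTh, hx1, hYx]
  clear eTh
  have hpnn : (0:ℝ) ≤ X12*(x1-X12) := mul_nonneg hX12n (by linarith)
  have hΔ0 : (0:ℝ) ≤ (Y12 * X11 - x1 ^ 2) * (Y12 * X11 - x1 ^ 2 + 4 * X12 * (x1 - X12)) :=
    mul_nonneg hth0 (by nlinarith [hth0, hpnn])
  have hX0 : X11 ≠ 0 := ne_of_gt hX
  have hA2 : 2*X11*A = 2*X11*x2 - 2*x1*X12 - (Y12*X11 - x1^2)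
      + Real.sqrt ((Y12 * X11 - x1 ^ 2) * (Y12 * X11 - x1 ^ 2 + 4 * X12 * (x1 - X12))) := by
    rw [hAdef]; unfold alpha2plus; field_simp; ring
  have hσ0 : (0:ℝ) ≤ 2*X11*A - 2*X11*x2 + 2*x1*X12 + (Y12*X11 - x1^2) := by
    have := Real.sqrt_nonneg ((Y12 * X11 - x1 ^ 2) * (Y12 * X11 - x1 ^ 2 + 4 * X12 * (x1 - X12)))
    linarith
  have hσq : (2*X11*A - 2*X11*x2 + 2*x1*X12 + (Y12*X11 - x1^2))^2
      = (Y12 * X11 - x1 ^ 2) * (Y12 * X11 - x1 ^ 2 + 4 * X12 * (x1 - X12)) := by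
    have h1 : 2*X11*A - 2*X11*x2 + 2*x1*X12 + (Y12*X11 - x1^2)
        = Real.sqrt ((Y12 * X11 - x1 ^ 2) * (Y12 * X11 - x1 ^ 2 + 4 * X12 * (x1 - X12))) := by
      linarith
    rw [h1, Real.sq_sqrt hΔ0]
  have hAa2 : A < a2 := hgt
  -- g - σ = 2 X11 (a2 - A) > 0
  have hgmσ : 0 < (Y12*X11 - x1^2) + 2*x1*X12 - 2*X11*(x2-a2)
      - (2*X11*A - 2*X11*x2 + 2*x1*X12 + (Y12*X11 - x1^2)) := by
    have := mul_pos hX (sub_pos.mpr hAa2); nlinarith [this]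
  have hgpσ : 0 < (Y12*X11 - x1^2) + 2*x1*X12 - 2*X11*(x2-a2)
      + (2*X11*A - 2*X11*x2 + 2*x1*X12 + (Y12*X11 - x1^2)) := by linarith
  have hprod := mul_pos hgmσ hgpσ
  -- f(X11,t) < 0 i.e. fexpr > 0
  have hfpos : 0 < X11*(x2-a2)^2 - ((Y12*X11 - x1^2) + 2*x1*X12)*(x2-a2) + Y12*X12^2 := by
    nlinarith only [hprod, hσq, hX]
  -- h = x1*X12 - X11*t > 0
  have hgpos : 0 < (Y12*X11 - x1^2) + 2*x1*X12 - 2*X11*(x2-a2) := by linarith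
  have hh : 0 < x1*X12 - X11*(x2-a2) := by
    nlinarith only [hprod, hσq, mul_nonneg hth0 hpnn, hgpos, hσ0]
  -- σ ≥ θ
  have hσth : Y12*X11 - x1^2 ≤ 2*X11*A - 2*X11*x2 + 2*x1*X12 + (Y12*X11 - x1^2) := by
    nlinarith only [hσq, hσ0, hth0, mul_nonneg hth0 hpnn]
  -- detN ≥ 0 (times θ) from P5
  have eN := hP5.dotProduct_mulVec_nonneg ![0, 0, x1*X12 - X11*(x2-a2), x1*(x2-a2) - Y12*X12, Y12*X11 - x1^2]
  simp [Matrix.mulVec, dotProduct, Fin.sum_univ_succ] at eN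
  -- θ > 0
  have hthpos : 0 < Y12*X11 - x1^2 := by
    rcases hth0.lt_or_eq with hpos | htheq
    · exact hpos
    · exfalso
      have hsq : (2*X11*A - 2*X11*x2 + 2*x1*X12 + (Y12*X11 - x1^2))^2 = 0 := by
        rw [hσq, ← htheq]; ring
      have hσz : 2*X11*A - 2*X11*x2 + 2*x1*X12 + (Y12*X11 - x1^2) = 0 :=
        pow_eq_zero_iff (two_ne_zero) |>.mp hsq
      have hh0 : 0 < x1*X12 - X11*(x2-a2) := by linarith
      have hdisc : ∀ μ : ℝ, 0 ≤ X22*(μ*μ) + (2*(x1*(x2-a2) - Y12*X12))*μ + 0 := by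
        intro μ
        have e := hP5.dotProduct_mulVec_nonneg ![0, 0, x1, -Y12, μ]
        simp [Matrix.mulVec, dotProduct, Fin.sum_univ_succ] at e
        nlinarith only [e, hY12n, htheq.le, htheq.ge]
      have hdd := discrim_le_zero hdisc
      rw [discrim] at hdd
      have hc0 : x1*(x2-a2) - Y12*X12 = 0 := by nlinarith only [hdd]
      nlinarith only [mul_pos hx1 hh0, hc0, hX12n, htheq.le, htheq.ge, hX]
  have hdetN : 0 ≤ (Y12*X11 - x1^2)*X22 + 2*x1*X12*(x2-a2) - X11*(x2-a2)^2 - Y12*X12^2 := by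
    nlinarith only [eN, hthpos]
  clear eN
  have hX22t : x2 - a2 < X22 := by
    nlinarith only [hdetN, hfpos, hthpos]
  have ha2 : 0 < a2 := by linarith
  have hq : 0 < y2 - Y12 := lt_of_lt_of_le ha2 l10
  -- detC ≥ 0 (times qθ) from P5
  have eC := hP5.dotProduct_mulVec_nonneg ![0, -(a2*(Y12*X11 - x1^2)), (y2-Y12)*(x1*X12 - X11*(x2-a2)),
      (y2-Y12)*(x1*(x2-a2) - Y12*X12), (y2-Y12)*(Y12*X11 - x1^2)]
  simp [Matrix.mulVec, dotProduct, Fin.sum_univ_succ] at eC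
  have hdetC : 0 ≤ (y2-Y12)*((Y12*X11 - x1^2)*X22 + 2*x1*X12*(x2-a2) - X11*(x2-a2)^2 - Y12*X12^2)
      - a2^2*(Y12*X11 - x1^2) := by
    nlinarith only [eC, mul_pos hq hthpos]
  clear eC
  -- g + σ ≥ 2θ
  have hgps2th : 2*(Y12*X11 - x1^2) ≤ ((Y12*X11 - x1^2) + 2*x1*X12 - 2*X11*(x2-a2))
      + (2*X11*A - 2*X11*x2 + 2*x1*X12 + (Y12*X11 - x1^2)) := by linarith
  -- A ≥ 0
  have hc1 : X11*(x2-a2)^2 - ((Y12*X11 - x1^2)+2*x1*X12)*(x2-a2) + Y12*X12^2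
      ≤ (Y12*X11 - x1^2)*a2 := by
    nlinarith only [hdetN, mul_nonneg hthpos.le (sub_nonneg.mpr l3)]
  have hA0 : 0 ≤ A := by
    have hp1 := mul_le_mul_of_nonneg_left hgps2th hgmσ.le
    have hc14 := mul_le_mul_of_nonneg_left hc1 (by linarith : (0:ℝ) ≤ 4*X11)
    nlinarith only [hp1, hσq, hc14, mul_pos hX hthpos]
  -- new RLT
  have hupr : (0:ℝ) ≤ (x1-X11)*(x1-X12) := mul_nonneg (by linarith) (by linarith)
  have hRLT : x1 + (x2 - A) - Y12 ≤ X12 := by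
    have h2 : 2*X11*(x1 + (x2 - A) - Y12 - X12) ≤ 0 := by linarith only [hσth, hupr, hth0]
    nlinarith only [h2, hX]
  -- ψ ≥ 0
  have hBnn : 0 ≤ (y2-Y12)*((((Y12*X11 - x1^2) + 2*x1*X12 - 2*X11*(x2-a2))
        + (2*X11*A - 2*X11*x2 + 2*x1*X12 + (Y12*X11 - x1^2))) - 2*(Y12*X11 - x1^2))
      + 2*(Y12*X11 - x1^2)*(a2+A) :=
    add_nonneg (mul_nonneg hq.le (by linarith)) (mul_nonneg (by linarith) (by linarith))
  have hGB := mul_nonneg hgmσ.le hBnn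
  have hfq : (y2-Y12)*(X11*(x2-a2)^2 - ((Y12*X11 - x1^2)+2*x1*X12)*(x2-a2) + Y12*X12^2)
      ≤ (Y12*X11 - x1^2)*((y2-Y12)*(X22-(x2-a2)) - a2^2) := by linarith [hdetC]
  have hfq4 := mul_le_mul_of_nonneg_left hfq (by linarith [hX] : (0:ℝ) ≤ 4*X11)
  have hid : 4*X11*((y2-Y12)*(X11*(x2-a2)^2 - ((Y12*X11 - x1^2)+2*x1*X12)*(x2-a2) + Y12*X12^2)
        + (Y12*X11 - x1^2)*(a2-A)*(a2+A-(y2-Y12)))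
      = (((Y12*X11 - x1^2) + 2*x1*X12 - 2*X11*(x2-a2))
          - (2*X11*A - 2*X11*x2 + 2*x1*X12 + (Y12*X11 - x1^2)))
        * ((y2-Y12)*((((Y12*X11 - x1^2) + 2*x1*X12 - 2*X11*(x2-a2))
            + (2*X11*A - 2*X11*x2 + 2*x1*X12 + (Y12*X11 - x1^2))) - 2*(Y12*X11 - x1^2))
          + 2*(Y12*X11 - x1^2)*(a2+A)) := by
    linear_combination (y2-Y12) * hσq
  have hψ : 0 ≤ (y2-Y12)*(X22-(x2-A)) - A^2 := by
    nlinarith only [hGB, hid, hfq4, mul_pos hX hthpos]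
  -- key quadratic identity used by all PSD decompositions
  have hkey0 : (X11*(x2-A) - x1*X12)^2 + (Y12*X11 - x1^2)*X12^2
      = (Y12*X11 - x1^2)*(X11*(x2-A)) := by
    linear_combination (1/4) * hσq
  have hy1Y : (0:ℝ) ≤ y1 - Y12 := by linarith
  have hu : (0:ℝ) ≤ x1 - X11 := by linarith
  clear hP3 hP4b hP5 hprod hgpσ l5 l6 hgt
  refine ⟨?_, ?_, ?_, ?_, ?_⟩
  · -- Lcond
    refine ⟨l1, l2, l3, l4, ?_, ?_, le_refl 0, by linarith, hA0, by linarith, l11, l12⟩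
    · exact max_le (by linarith [hX12n]) (by linarith [hRLT])
    · exact le_min (by linarith [hX12x1]) (by linarith [hX12t, hAa2])
  · -- P3cond
    unfold P3cond
    refine Matrix.PosSemidef.of_dotProduct_mulVec_nonneg (by ext i j; fin_cases i <;> fin_cases j <;> rfl) (fun v => ?_)
    have key3 : 4*(Y12*X11 - x1^2)*X11*(Y12*(v 0)^2 + 2*x1*(v 0)*(v 1) + 2*(x2-A)*(v 0)*(v 2)
          + x1*(v 1)^2 + 2*X12*(v 1)*(v 2) + (x2-A)*(v 2)^2)
        = 4*(Y12*X11 - x1^2)*(x1*(v 0) + X11*(v 1) + X12*(v 2))^2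
          + 4*((Y12*X11 - x1^2)*(v 0) + (X11*(x2-A) - x1*X12)*(v 2))^2
          + 4*(Y12*X11 - x1^2)*X11*(x1-X11)*(v 1)^2 := by
      linear_combination (-4*(v 2)^2) * hkey0
    simp [Matrix.mulVec, dotProduct, Fin.sum_univ_succ]
    nlinarith only [key3, mul_nonneg hthpos.le (sq_nonneg (x1*(v 0) + X11*(v 1) + X12*(v 2))),
      sq_nonneg ((Y12*X11 - x1^2)*(v 0) + (X11*(x2-A) - x1*X12)*(v 2)),
      mul_nonneg (mul_nonneg (mul_nonneg hthpos.le hX.le) hu) (sq_nonneg (v 1)),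
      mul_pos hthpos hX]
  · -- P4acond
    unfold P4acond
    refine Matrix.PosSemidef.of_dotProduct_mulVec_nonneg (by ext i j; fin_cases i <;> fin_cases j <;> rfl) (fun v => ?_)
    have keya : 4*(Y12*X11 - x1^2)*X11*((y1-Y12)*(v 0)^2 + Y12*(v 1)^2 + 2*x1*(v 1)*(v 2)
          + 2*(x2-A)*(v 1)*(v 3) + X11*(v 2)^2 + 2*X12*(v 2)*(v 3) + (x2-A)*(v 3)^2)
        = 4*(Y12*X11 - x1^2)*X11*(y1-Y12)*(v 0)^2
          + 4*(Y12*X11 - x1^2)*(x1*(v 1) + X11*(v 2) + X12*(v 3))^2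
          + 4*((Y12*X11 - x1^2)*(v 1) + (X11*(x2-A) - x1*X12)*(v 3))^2 := by
      linear_combination (-4*(v 3)^2) * hkey0
    simp [Matrix.mulVec, dotProduct, Fin.sum_univ_succ,
      show (Fin.succ 2 : Fin 4) = 3 from rfl]
    nlinarith only [keya, mul_nonneg hthpos.le (sq_nonneg (x1*(v 1) + X11*(v 2) + X12*(v 3))),
      sq_nonneg ((Y12*X11 - x1^2)*(v 1) + (X11*(x2-A) - x1*X12)*(v 3)),
      mul_nonneg (mul_nonneg (mul_nonneg hthpos.le hX.le) hy1Y) (sq_nonneg (v 0)),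
      mul_pos hthpos hX]
  · -- P4bcond
    unfold P4bcond
    refine Matrix.PosSemidef.of_dotProduct_mulVec_nonneg (by ext i j; fin_cases i <;> fin_cases j <;> rfl) (fun v => ?_)
    have keyb : 4*(Y12*X11 - x1^2)*X11*(y2-Y12)*((y2-Y12)*(v 0)^2 + 2*A*(v 0)*(v 3)
          + Y12*(v 1)^2 + 2*x1*(v 1)*(v 2) + 2*(x2-A)*(v 1)*(v 3) + x1*(v 2)^2
          + 2*X12*(v 2)*(v 3) + X22*(v 3)^2)
        = 4*(Y12*X11 - x1^2)*X11*((y2-Y12)*(v 0) + A*(v 3))^2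
          + 4*(Y12*X11 - x1^2)*(y2-Y12)*(x1*(v 1) + X11*(v 2) + X12*(v 3))^2
          + 4*(y2-Y12)*((Y12*X11 - x1^2)*(v 1) + (X11*(x2-A) - x1*X12)*(v 3))^2
          + 4*(Y12*X11 - x1^2)*X11*((y2-Y12)*(X22-(x2-A)) - A^2)*(v 3)^2
          + 4*(Y12*X11 - x1^2)*X11*(y2-Y12)*(x1-X11)*(v 2)^2 := by
      linear_combination (-4*(y2-Y12)*(v 3)^2) * hkey0
    simp [Matrix.mulVec, dotProduct, Fin.sum_univ_succ,
      show (Fin.succ 2 : Fin 4) = 3 from rfl]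
    nlinarith only [keyb,
      mul_nonneg (mul_nonneg hthpos.le hX.le) (sq_nonneg ((y2-Y12)*(v 0) + A*(v 3))),
      mul_nonneg (mul_nonneg hthpos.le hq.le) (sq_nonneg (x1*(v 1) + X11*(v 2) + X12*(v 3))),
      mul_nonneg hq.le (sq_nonneg ((Y12*X11 - x1^2)*(v 1) + (X11*(x2-A) - x1*X12)*(v 3))),
      mul_nonneg (mul_nonneg (mul_nonneg hthpos.le hX.le) hψ) (sq_nonneg (v 3)),
      mul_nonneg (mul_nonneg (mul_nonneg (mul_nonneg hthpos.le hX.le) hq.le) hu) (sq_nonneg (v 2)),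
      mul_pos (mul_pos hthpos hX) hq]
  · -- P5cond
    unfold P5cond
    refine Matrix.PosSemidef.of_dotProduct_mulVec_nonneg (by ext i j; fin_cases i <;> fin_cases j <;> rfl) (fun v => ?_)
    have key5 : 4*(Y12*X11 - x1^2)*X11*(y2-Y12)*((y1-Y12)*(v 0)^2 + (y2-Y12)*(v 1)^2
          + 2*A*(v 1)*(v 4) + Y12*(v 2)^2 + 2*x1*(v 2)*(v 3) + 2*(x2-A)*(v 2)*(v 4)
          + X11*(v 3)^2 + 2*X12*(v 3)*(v 4) + X22*(v 4)^2)
        = 4*(Y12*X11 - x1^2)*X11*(y2-Y12)*(y1-Y12)*(v 0)^2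
          + 4*(Y12*X11 - x1^2)*X11*((y2-Y12)*(v 1) + A*(v 4))^2
          + 4*(Y12*X11 - x1^2)*(y2-Y12)*(x1*(v 2) + X11*(v 3) + X12*(v 4))^2
          + 4*(y2-Y12)*((Y12*X11 - x1^2)*(v 2) + (X11*(x2-A) - x1*X12)*(v 4))^2
          + 4*(Y12*X11 - x1^2)*X11*((y2-Y12)*(X22-(x2-A)) - A^2)*(v 4)^2 := by
      linear_combination (-4*(y2-Y12)*(v 4)^2) * hkey0
    simp [Matrix.mulVec, dotProduct, Fin.sum_univ_succ,
      show (Fin.succ 2 : Fin 5) = 3 from rfl, show ((Fin.succ 2 : Fin 4).succ : Fin 5) = 4 from rfl]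
    nlinarith only [key5,
      mul_nonneg (mul_nonneg (mul_nonneg hthpos.le hX.le) hq.le) (mul_nonneg hy1Y (sq_nonneg (v 0))),
      mul_nonneg (mul_nonneg hthpos.le hX.le) (sq_nonneg ((y2-Y12)*(v 1) + A*(v 4))),
      mul_nonneg (mul_nonneg hthpos.le hq.le) (sq_nonneg (x1*(v 2) + X11*(v 3) + X12*(v 4))),
      mul_nonneg hq.le (sq_nonneg ((Y12*X11 - x1^2)*(v 2) + (X11*(x2-A) - x1*X12)*(v 4))),
      mul_nonneg (mul_nonneg (mul_nonneg hthpos.le hX.le) hψ) (sq_nonneg (v 4)),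
      mul_pos (mul_pos hthpos hX) hq]
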